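/- Poincaré-type inequality on a ball for radial functions: if f : ℝ³ → ℝ is a radial C¹ function of compact support, f(x) = g(‖x‖) with g ∈ C¹, and E = B(0,r) is the ball of radius r in ℝ³, then ∫_E |f|² dv ≤ (8r²/9) ∫_{ℝ³} ‖∇f‖² dv. -/

import Mathlib

open MeasureTheory Metric Set

/-- Composing a continuous linear functional with a linear isometry equivalence
preserves the operator norm. -/
lemma aux_norm_comp_iso {E : Type*} [NormedAddCommGroup E] [NormedSpace ℝ E]
    (L : E →L[ℝ] ℝ) (R : E ≃ₗᵢ[ℝ] E) :
    ‖L.comp (R : E →L[ℝ] E)‖ = ‖L‖ := by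
  apply le_antisymm
  · refine ContinuousLinearMap.opNorm_le_bound _ (norm_nonneg L) fun z => ?_
    calc ‖(L.comp (R : E →L[ℝ] E)) z‖ = ‖L (R z)‖ := rfl
      _ ≤ ‖L‖ * ‖R z‖ := L.le_opNorm _
      _ = ‖L‖ * ‖z‖ := by rw [R.norm_map]
  · refine ContinuousLinearMap.opNorm_le_bound _ (norm_nonneg _) fun z => ?_
    calc ‖L z‖ = ‖(L.comp (R : E →L[ℝ] E)) (R.symm z)‖ := by
          simp [ContinuousLinearMap.comp_apply]
      _ ≤ ‖L.comp (R : E →L[ℝ] E)‖ * ‖R.symm z‖ := ContinuousLinearMap.le_opNorm _ _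
      _ = ‖L.comp (R : E →L[ℝ] E)‖ * ‖z‖ := by rw [R.symm.norm_map]

/-- For a radial differentiable function, the norm of the derivative is radial. -/
lemma aux_fderiv_radial {E : Type*} [NormedAddCommGroup E] [InnerProductSpace ℝ E]
    [CompleteSpace E]
    (f : E → ℝ) (hf : Differentiable ℝ f) (g : ℝ → ℝ) (hradial : ∀ x, f x = g ‖x‖)
    (x y : E) (hxy : ‖x‖ = ‖y‖) : ‖fderiv ℝ f x‖ = ‖fderiv ℝ f y‖ := by
  set R : E ≃ₗᵢ[ℝ] E := Submodule.reflection (ℝ ∙ (x - y))ᗮ with hR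
  have hRx : R x = y := Submodule.reflection_sub hxy
  have hcomp : f ∘ R = f := by
    funext z
    simp only [Function.comp_apply, hradial, R.norm_map]
  have hder : HasFDerivAt (f ∘ R) ((fderiv ℝ f (R x)).comp (R : E →L[ℝ] E)) x :=
    (hf (R x)).hasFDerivAt.comp x R.hasFDerivAt
  have h1 : fderiv ℝ f x = (fderiv ℝ f (R x)).comp (R : E →L[ℝ] E) := by
    conv_lhs => rw [← hcomp]
    exact hder.fderiv
  rw [h1, hRx, aux_norm_comp_iso]

/-- 1D key estimate: if `h` is `C¹` vanishing at infinity, then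
`s * h s ^ 2 ≤ ∫_{(0,∞)} t² h'(t)²` for `s > 0`. -/
lemma aux_key1d (h h' : ℝ → ℝ) (hd : ∀ t, HasDerivAt h (h' t) t) (hc : Continuous h')
    (R₀ : ℝ) (hR₀ : ∀ t, R₀ ≤ t → h t = 0)
    (hint : IntegrableOn (fun t => t ^ 2 * h' t ^ 2) (Ioi 0))
    (s : ℝ) (hs : 0 < s) :
    s * h s ^ 2 ≤ ∫ t in Ioi (0:ℝ), t ^ 2 * h' t ^ 2 := by
  set A : ℝ := ∫ t in Ioi (0:ℝ), t ^ 2 * h' t ^ 2 with hA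
  have hA0 : 0 ≤ A := setIntegral_nonneg measurableSet_Ioi fun t _ => by positivity
  set T : ℝ := max s R₀ with hT
  have hsT : s ≤ T := le_max_left _ _
  have hTs : (0:ℝ) < T := lt_of_lt_of_le hs hsT
  have hhT : h T = 0 := hR₀ T (le_max_right _ _)
  -- FTC
  have hftc : ∫ t in s..T, h' t = h T - h s :=
    intervalIntegral.integral_eq_sub_of_hasDerivAt (fun t _ => hd t)
      (hc.intervalIntegrable s T)
  have hhs : |h s| = |∫ t in s..T, h' t| := by
    rw [hftc, hhT, zero_sub, abs_neg]
  -- the λ-family of bounds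
  have hlam : ∀ lam : ℝ, 0 < lam → 2 * |h s| ≤ lam * A + 1 / (lam * s) := by
    intro lam hl
    -- interval integral of t⁻²
    have hinv_int : IntervalIntegrable (fun t : ℝ => (t ^ 2)⁻¹) volume s T := by
      apply ContinuousOn.intervalIntegrable
      apply ContinuousOn.inv₀
      · exact (continuous_pow 2).continuousOn
      · intro t ht
        rw [Set.uIcc_of_le hsT] at ht
        have h0 : 0 < t := lt_of_lt_of_le hs ht.1
        positivity
    have hinv_val : ∫ t in s..T, (t ^ 2)⁻¹ ≤ 1 / s := by
      have hcalc : ∫ t in s..T, (t ^ 2)⁻¹ = (-T⁻¹) - (-s⁻¹) := by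
        apply intervalIntegral.integral_eq_sub_of_hasDerivAt (f := fun t => -t⁻¹)
        · intro t ht
          rw [Set.uIcc_of_le hsT] at ht
          have ht0 : t ≠ 0 := (lt_of_lt_of_le hs ht.1).ne'
          have hder := (hasDerivAt_inv ht0).neg; rw [neg_neg] at hder; exact hder
        · exact hinv_int
      rw [hcalc]
      have hT0 : 0 < T⁻¹ := by positivity
      rw [one_div]
      linarith
    -- interval integral of t² h'²  is at most A
    have hsq_int : IntervalIntegrable (fun t : ℝ => t ^ 2 * h' t ^ 2) volume s T :=
      ((continuous_pow 2).mul (hc.pow 2)).intervalIntegrable s T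
    have hsq_le : ∫ t in s..T, t ^ 2 * h' t ^ 2 ≤ A := by
      rw [intervalIntegral.integral_of_le hsT]
      apply setIntegral_mono_set hint
      · filter_upwards with t using by positivity
      · exact ((Set.Ioc_subset_Ioi_self).trans (Set.Ioi_subset_Ioi hs.le)).eventuallyLE
    -- pointwise bound on |h'|
    have hpt : ∀ t ∈ Set.Icc s T, |h' t| ≤
        lam / 2 * (t ^ 2 * h' t ^ 2) + 1 / (2 * lam) * (t ^ 2)⁻¹ := by
      intro t ht
      have ht0 : 0 < t := lt_of_lt_of_le hs ht.1
      have key : 2 * lam * t ^ 2 * |h' t| ≤ lam ^ 2 * t ^ 4 * h' t ^ 2 + 1 := by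
        have ha : 0 ≤ (lam * t ^ 2 * |h' t| - 1) ^ 2 := sq_nonneg _
        have hb : (lam * t ^ 2 * |h' t| - 1) ^ 2
            = lam ^ 2 * t ^ 4 * |h' t| ^ 2 - 2 * lam * t ^ 2 * |h' t| + 1 := by ring
        have hcsq : |h' t| ^ 2 = h' t ^ 2 := sq_abs _
        rw [hb, hcsq] at ha
        linarith
      rw [← sub_nonneg]
      have heq : lam / 2 * (t ^ 2 * h' t ^ 2) + 1 / (2 * lam) * (t ^ 2)⁻¹ - |h' t|
          = (lam ^ 2 * t ^ 4 * h' t ^ 2 + 1 - 2 * lam * t ^ 2 * |h' t|) / (2 * lam * t ^ 2) := by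
        field_simp
      rw [heq]
      apply div_nonneg _ (by positivity)
      linarith
    -- combine
    have habs_le : |h s| ≤ ∫ t in s..T, |h' t| := by
      rw [hhs]
      exact intervalIntegral.abs_integral_le_integral_abs hsT
    have hbound_int : IntervalIntegrable
        (fun t : ℝ => lam / 2 * (t ^ 2 * h' t ^ 2) + 1 / (2 * lam) * (t ^ 2)⁻¹) volume s T :=
      (hsq_int.const_mul _).add (hinv_int.const_mul _)
    have hmono : ∫ t in s..T, |h' t| ≤
        ∫ t in s..T, (lam / 2 * (t ^ 2 * h' t ^ 2) + 1 / (2 * lam) * (t ^ 2)⁻¹) :=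
      intervalIntegral.integral_mono_on hsT (hc.abs.intervalIntegrable s T) hbound_int hpt
    have hsplit : ∫ t in s..T, (lam / 2 * (t ^ 2 * h' t ^ 2) + 1 / (2 * lam) * (t ^ 2)⁻¹)
        = lam / 2 * (∫ t in s..T, t ^ 2 * h' t ^ 2) + 1 / (2 * lam) * ∫ t in s..T, (t ^ 2)⁻¹ := by
      rw [intervalIntegral.integral_add (hsq_int.const_mul _) (hinv_int.const_mul _),
        intervalIntegral.integral_const_mul, intervalIntegral.integral_const_mul]
    have hfin : 1 / lam * (1 / s) = 1 / (lam * s) := by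
      rw [div_mul_div_comm, one_mul]
    have hS : lam / 2 * (∫ t in s..T, t ^ 2 * h' t ^ 2) ≤ lam / 2 * A :=
      mul_le_mul_of_nonneg_left hsq_le (by positivity)
    have hI : 1 / (2 * lam) * (∫ t in s..T, (t ^ 2)⁻¹) ≤ 1 / (2 * lam) * (1 / s) :=
      mul_le_mul_of_nonneg_left hinv_val (by positivity)
    have h2 : 2 * |h s| ≤ lam * A + 2 * (1 / (2 * lam) * (1 / s)) := by
      have := habs_le.trans (hmono.trans_eq hsplit)
      linarith [hS, hI]
    calc 2 * |h s| ≤ lam * A + 2 * (1 / (2 * lam) * (1 / s)) := h2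
      _ = lam * A + 1 / lam * (1 / s) := by
          have : (2:ℝ) * (1 / (2 * lam) * (1 / s)) = 1 / lam * (1 / s) := by
            field_simp
          rw [this]
      _ = lam * A + 1 / (lam * s) := by rw [hfin]
  -- conclude
  by_cases hzero : h s = 0
  · rw [hzero]; simpa using hA0
  · have habs : 0 < |h s| := abs_pos.mpr hzero
    have hbig := hlam (1 / (s * |h s|)) (by positivity)
    have h1 : 1 / (1 / (s * |h s|) * s) = |h s| := by
      field_simp
    rw [h1] at hbig
    have h2 : |h s| ≤ 1 / (s * |h s|) * A := by linarith
    have h3 : s * |h s| * |h s| ≤ A := by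
      rw [div_mul_eq_mul_div, one_mul, le_div_iff₀ (by positivity)] at h2
      nlinarith
    calc s * h s ^ 2 = s * |h s| * |h s| := by rw [← sq_abs]; ring
      _ ≤ A := h3

/-- Poincaré-type inequality on a ball for radial functions in ℝ³:
if `f` is a compactly supported `C¹` radial function, then
`∫_{B(0,r)} |f|² ≤ (8r²/9) ∫_{ℝ³} ‖∇f‖²`. -/
theorem stmt_2 (r : ℝ) (hr : 0 < r)
    (f : EuclideanSpace ℝ (Fin 3) → ℝ)
    (hf : ContDiff ℝ 1 f) (hsupp : HasCompactSupport f)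
    (g : ℝ → ℝ) (hradial : ∀ x, f x = g ‖x‖) :
    ∫ x in ball (0 : EuclideanSpace ℝ (Fin 3)) r, |f x| ^ 2
      ≤ (8 * r ^ 2 / 9) * ∫ x, ‖fderiv ℝ f x‖ ^ 2 := by
  have hdf : Differentiable ℝ f := hf.differentiable one_ne_zero
  have hcf' : Continuous (fderiv ℝ f) := hf.continuous_fderiv one_ne_zero
  set e : EuclideanSpace ℝ (Fin 3) := EuclideanSpace.single 0 1 with he_def
  have he : ‖e‖ = 1 := by rw [he_def, EuclideanSpace.norm_single]; norm_num
  have hnorm_smul : ∀ t : ℝ, ‖t • e‖ = |t| := fun t => by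
    rw [norm_smul, he, mul_one, Real.norm_eq_abs]
  set h : ℝ → ℝ := fun t => f (t • e) with hh_def
  set h' : ℝ → ℝ := fun t => fderiv ℝ f (t • e) e with hh'_def
  have hsmul_cont : Continuous fun t : ℝ => t • e := continuous_id.smul continuous_const
  have hd : ∀ t, HasDerivAt h (h' t) t := by
    intro t
    have h1 : HasDerivAt (fun t : ℝ => t • e) e t := by
      simpa using (hasDerivAt_id t).smul_const e
    exact (hdf (t • e)).hasFDerivAt.comp_hasDerivAt t h1
  have hc' : Continuous h' := (hcf'.comp hsmul_cont).clm_apply continuous_const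
  -- support radii
  obtain ⟨R₀, hR₀⟩ := hsupp.isBounded.subset_closedBall (0 : EuclideanSpace ℝ (Fin 3))
  obtain ⟨R₁', hR₁'⟩ := (HasCompactSupport.fderiv (𝕜 := ℝ) hsupp).isBounded.subset_closedBall (0 : EuclideanSpace ℝ (Fin 3))
  set R₁ : ℝ := max R₁' 0 with hR₁_def
  have hR₁0 : 0 ≤ R₁ := le_max_right _ _
  have hR₁ : tsupport (fderiv ℝ f) ⊆ closedBall 0 R₁ :=
    hR₁'.trans (closedBall_subset_closedBall (le_max_left _ _))
  have hhzero : ∀ t, R₀ + 1 ≤ t → h t = 0 := by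
    intro t ht
    show f (t • e) = 0
    apply image_eq_zero_of_notMem_tsupport
    intro hmem
    have h2 := mem_closedBall_zero_iff.mp (hR₀ hmem)
    rw [hnorm_smul] at h2
    have := le_abs_self t
    linarith
  have hderiv_zero : ∀ t : ℝ, R₁ < |t| → fderiv ℝ f (t • e) = 0 := by
    intro t ht
    apply image_eq_zero_of_notMem_tsupport
    intro hmem
    have h2 := mem_closedBall_zero_iff.mp (hR₁ hmem)
    rw [hnorm_smul] at h2
    linarith
  have habs_big : ∀ t : ℝ, t ∉ Set.Icc (-(R₁ + 1)) (R₁ + 1) → R₁ < |t| := by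
    intro t ht
    rw [Set.mem_Icc, not_and_or, not_le, not_le] at ht
    rcases ht with h1 | h1
    · have htneg : t < 0 := by linarith
      rw [abs_of_neg htneg]
      linarith
    · rw [abs_of_pos (by linarith)]
      linarith
  -- integrability
  have hk2cont : Continuous fun t : ℝ => t ^ 2 * ‖fderiv ℝ f (t • e)‖ ^ 2 :=
    (continuous_pow 2).mul ((hcf'.comp hsmul_cont).norm.pow 2)
  have hk2supp : HasCompactSupport fun t : ℝ => t ^ 2 * ‖fderiv ℝ f (t • e)‖ ^ 2 := by
    apply HasCompactSupport.intro (isCompact_Icc (a := -(R₁ + 1)) (b := R₁ + 1))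
    intro t ht
    rw [hderiv_zero t (habs_big t ht)]
    simp
  have hk2int : Integrable fun t : ℝ => t ^ 2 * ‖fderiv ℝ f (t • e)‖ ^ 2 :=
    hk2cont.integrable_of_hasCompactSupport hk2supp
  have hk1cont : Continuous fun t : ℝ => t ^ 2 * h' t ^ 2 :=
    (continuous_pow 2).mul (hc'.pow 2)
  have hk1supp : HasCompactSupport fun t : ℝ => t ^ 2 * h' t ^ 2 := by
    apply HasCompactSupport.intro (isCompact_Icc (a := -(R₁ + 1)) (b := R₁ + 1))
    intro t ht
    have : h' t = 0 := by
      rw [hh'_def]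
      simp only
      rw [hderiv_zero t (habs_big t ht)]
      simp
    rw [this]
    ring
  have hk1int : Integrable fun t : ℝ => t ^ 2 * h' t ^ 2 :=
    hk1cont.integrable_of_hasCompactSupport hk1supp
  have hk1le : ∀ t : ℝ, t ^ 2 * h' t ^ 2 ≤ t ^ 2 * ‖fderiv ℝ f (t • e)‖ ^ 2 := by
    intro t
    have h1 : |h' t| ≤ ‖fderiv ℝ f (t • e)‖ := by
      calc |h' t| = ‖fderiv ℝ f (t • e) e‖ := (Real.norm_eq_abs _).symm
        _ ≤ ‖fderiv ℝ f (t • e)‖ * ‖e‖ := ContinuousLinearMap.le_opNorm _ _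
        _ = ‖fderiv ℝ f (t • e)‖ := by rw [he, mul_one]
    have h2 : h' t ^ 2 ≤ ‖fderiv ℝ f (t • e)‖ ^ 2 := by
      nlinarith [abs_nonneg (h' t), sq_abs (h' t)]
    exact mul_le_mul_of_nonneg_left h2 (sq_nonneg t)
  set A : ℝ := ∫ t in Ioi (0:ℝ), t ^ 2 * h' t ^ 2 with hA_def
  have hA0 : 0 ≤ A := setIntegral_nonneg measurableSet_Ioi fun t _ => by positivity
  have hkey : ∀ s : ℝ, 0 < s → s * h s ^ 2 ≤ A :=
    aux_key1d h h' hd hc' (R₀ + 1) hhzero hk1int.integrableOn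
  -- polar coordinates
  have hdim : Module.finrank ℝ (EuclideanSpace ℝ (Fin 3)) = 3 := finrank_euclideanSpace_fin
  set c : ℝ := (volume (ball (0 : EuclideanSpace ℝ (Fin 3)) 1)).toReal with hc_def
  have hc_pos : 0 < c := by
    rw [hc_def]
    exact ENNReal.toReal_pos (measure_ball_pos volume _ one_pos).ne' measure_ball_lt_top.ne
  -- LHS in polar coordinates
  set F : ℝ → ℝ := Set.indicator (Iio r) (fun t => g t ^ 2) with hF_def
  have hLpt : ∀ x : EuclideanSpace ℝ (Fin 3),
      (ball (0 : EuclideanSpace ℝ (Fin 3)) r).indicator (fun x => |f x| ^ 2) x = F ‖x‖ := by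
    intro x
    by_cases hx : ‖x‖ < r
    · rw [Set.indicator_of_mem (mem_ball_zero_iff.mpr hx), hF_def,
        Set.indicator_of_mem (Set.mem_Iio.mpr hx), hradial, sq_abs]
    · rw [Set.indicator_of_notMem (fun hmem => hx (mem_ball_zero_iff.mp hmem)), hF_def,
        Set.indicator_of_notMem (fun hmem => hx (Set.mem_Iio.mp hmem))]
  have hL : ∫ x in ball (0 : EuclideanSpace ℝ (Fin 3)) r, |f x| ^ 2
      = 3 * (c * ∫ y in Ioi (0:ℝ), y ^ 2 * F y) := by
    rw [← integral_indicator measurableSet_ball]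
    rw [show ((ball (0 : EuclideanSpace ℝ (Fin 3)) r).indicator fun x => |f x| ^ 2)
        = fun x => F ‖x‖ from funext hLpt]
    rw [integral_fun_norm_addHaar volume F, hdim]
    simp only [nsmul_eq_mul, smul_eq_mul]
    norm_num [mul_assoc]
    exact Or.inl rfl
  -- RHS in polar coordinates
  have hRpt : ∀ x : EuclideanSpace ℝ (Fin 3),
      ‖fderiv ℝ f x‖ ^ 2 = ‖fderiv ℝ f (‖x‖ • e)‖ ^ 2 := by
    intro x
    rw [aux_fderiv_radial f hdf g hradial x (‖x‖ • e)
      (by rw [hnorm_smul, abs_of_nonneg (norm_nonneg x)])]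
  have hRe : ∫ x, ‖fderiv ℝ f x‖ ^ 2
      = 3 * (c * ∫ y in Ioi (0:ℝ), y ^ 2 * ‖fderiv ℝ f (y • e)‖ ^ 2) := by
    rw [show (fun x : EuclideanSpace ℝ (Fin 3) => ‖fderiv ℝ f x‖ ^ 2)
        = fun x => (fun t : ℝ => ‖fderiv ℝ f (t • e)‖ ^ 2) ‖x‖ from funext hRpt]
    rw [integral_fun_norm_addHaar volume (fun t : ℝ => ‖fderiv ℝ f (t • e)‖ ^ 2), hdim]
    simp only [nsmul_eq_mul, smul_eq_mul]
    norm_num [mul_assoc]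
    exact Or.inl rfl
  -- 1D comparison
  have hind : ∀ y : ℝ, y ^ 2 * F y = Set.indicator (Iio r) (fun y => y ^ 2 * g y ^ 2) y := by
    intro y
    by_cases hy : y ∈ Iio r
    · rw [hF_def, Set.indicator_of_mem hy, Set.indicator_of_mem hy]
    · rw [hF_def, Set.indicator_of_notMem hy, Set.indicator_of_notMem hy, mul_zero]
  have hstep : ∫ y in Ioi (0:ℝ), y ^ 2 * F y = ∫ y in Ioo (0:ℝ) r, y ^ 2 * h y ^ 2 := by
    rw [show (fun y : ℝ => y ^ 2 * F y)
        = Set.indicator (Iio r) (fun y => y ^ 2 * g y ^ 2) from funext hind]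
    rw [integral_indicator measurableSet_Iio,
      Measure.restrict_restrict measurableSet_Iio, Set.Iio_inter_Ioi]
    apply setIntegral_congr_fun measurableSet_Ioo
    intro y hy
    have hhy : h y = g y := by
      show f (y • e) = g y
      rw [hradial, hnorm_smul, abs_of_pos hy.1]
    dsimp only
    rw [hhy]
  have hIntOn1 : IntegrableOn (fun y : ℝ => y ^ 2 * h y ^ 2) (Ioo 0 r) := by
    have : Continuous fun y : ℝ => y ^ 2 * h y ^ 2 := by
      apply (continuous_pow 2).mul
      exact ((hf.continuous).comp hsmul_cont).pow 2
    exact (this.continuousOn.integrableOn_compact isCompact_Icc).mono_set Set.Ioo_subset_Icc_self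
  have hIntOn2 : IntegrableOn (fun y : ℝ => A * y) (Ioo 0 r) := by
    have : Continuous fun y : ℝ => A * y := continuous_const.mul continuous_id
    exact (this.continuousOn.integrableOn_compact isCompact_Icc).mono_set Set.Ioo_subset_Icc_self
  have hmono2 : ∫ y in Ioo (0:ℝ) r, y ^ 2 * h y ^ 2 ≤ ∫ y in Ioo (0:ℝ) r, A * y := by
    apply setIntegral_mono_on hIntOn1 hIntOn2 measurableSet_Ioo
    intro y hy
    calc y ^ 2 * h y ^ 2 = y * (y * h y ^ 2) := by ring
      _ ≤ y * A := mul_le_mul_of_nonneg_left (hkey y hy.1) hy.1.le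
      _ = A * y := mul_comm _ _
  have hval : ∫ y in Ioo (0:ℝ) r, A * y = A * (r ^ 2 / 2) := by
    rw [← integral_Ioc_eq_integral_Ioo, ← intervalIntegral.integral_of_le hr.le,
      intervalIntegral.integral_const_mul, integral_id]
    ring
  set J2 : ℝ := ∫ y in Ioi (0:ℝ), y ^ 2 * ‖fderiv ℝ f (y • e)‖ ^ 2 with hJ2_def
  have hJ2_0 : 0 ≤ J2 := setIntegral_nonneg measurableSet_Ioi fun y _ => by positivity
  have hcomp : A ≤ J2 :=
    setIntegral_mono hk1int.integrableOn hk2int.integrableOn hk1le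
  have hX : ∫ y in Ioi (0:ℝ), y ^ 2 * F y ≤ A * (r ^ 2 / 2) := by
    rw [hstep]
    linarith [hmono2, hval.le, hval.ge]
  rw [hL, hRe]
  have hXfin : A * (r ^ 2 / 2) ≤ 8 * r ^ 2 / 9 * J2 := by
    nlinarith [hcomp, hA0, hJ2_0, sq_nonneg r]
  calc 3 * (c * ∫ y in Ioi (0:ℝ), y ^ 2 * F y) ≤ 3 * (c * (A * (r ^ 2 / 2))) := by
        apply mul_le_mul_of_nonneg_left _ (by norm_num)
        exact mul_le_mul_of_nonneg_left hX hc_pos.le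
    _ ≤ 3 * (c * (8 * r ^ 2 / 9 * J2)) := by
        apply mul_le_mul_of_nonneg_left _ (by norm_num)
        exact mul_le_mul_of_nonneg_left hXfin hc_pos.le
    _ = 8 * r ^ 2 / 9 * (3 * (c * J2)) := by ring
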